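/- Let p ≥ 3 be a prime, let F be the free group on 3 generators, and let G = F/(γ_3(F)F^p). Then for every x ∈ G one has {[x,g] : g ∈ G} ≠ G'; indeed |{[x,g] : g ∈ G}| ≤ p^2 while |G'| = p^3. -/

import Mathlib

/-!
STATEMENT 17: Let p ≥ 3 be a prime, let F be the free group on 3 generators,
and let G = F/(γ_3(F)F^p).  Then for every x ∈ G one has
{[x,g] : g ∈ G} ≠ G'; indeed |{[x,g] : g ∈ G}| ≤ p^2 while |G'| = p^3.

Here γ_3(F) = lowerCentralSeries F 2, F^p = sgPow ⊤ p = ⟨f^p : f ∈ F⟩, the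
product γ_3(F)F^p of the two normal subgroups is their join, and G' is
`commutator G`.
-/

/-- The subgroup `⟨h^n : h ∈ H⟩` generated by the `n`-th powers of elements of `H`. -/
def sgPow {G : Type*} [Group G] (H : Subgroup G) (n : ℕ) : Subgroup G :=
  Subgroup.closure ((· ^ n) '' (H : Set G))

/-- `G^n = ⟨g^n : g ∈ G⟩` is a normal subgroup. -/
instance sgPow_top_normal (G : Type*) [Group G] (n : ℕ) :
    (sgPow (⊤ : Subgroup G) n).Normal := by
  constructor
  intro x hx g
  unfold sgPow at *
  induction hx using Subgroup.closure_induction with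
  | mem y hy =>
    obtain ⟨z, -, rfl⟩ := hy
    refine Subgroup.subset_closure ⟨g * z * g⁻¹, trivial, ?_⟩
    show (g * z * g⁻¹) ^ n = g * z ^ n * g⁻¹
    induction n with
    | zero => group
    | succ m ih =>
      rw [pow_succ, pow_succ, ih]
      group
  | one => simpa using Subgroup.one_mem _
  | mul a b _ _ ha hb =>
    have : g * (a * b) * g⁻¹ = (g * a * g⁻¹) * (g * b * g⁻¹) := by group
    rw [this]; exact Subgroup.mul_mem _ ha hb
  | inv a _ ha =>
    have : g * a⁻¹ * g⁻¹ = (g * a * g⁻¹)⁻¹ := by group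
    rw [this]; exact Subgroup.inv_mem _ ha

/-- The normal subgroup `γ_3(F)F^p` of the free group `F` on 3 generators. -/
def NN (p : ℕ) : Subgroup (FreeGroup (Fin 3)) :=
  (⊤ : Subgroup (FreeGroup (Fin 3))).lowerCentralSeries 2 ⊔ sgPow (⊤ : Subgroup (FreeGroup (Fin 3))) p

instance NN_normal (p : ℕ) : (NN p).Normal := by
  unfold NN; infer_instance

open scoped commutatorElement


namespace St17

variable (p : ℕ)

abbrev V := Fin 3 → ZMod p

def fA : Fin 3 → Fin 3 | 0 => 0 | 1 => 0 | 2 => 1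
def fB : Fin 3 → Fin 3 | 0 => 1 | 1 => 2 | 2 => 2

variable {p}

/-- cocycle: fc v w = (v0 w1, v0 w2, v1 w2) -/
def fc (v w : V p) : V p := fun k => v (fA k) * w (fB k)

/-- skew form -/
def om (v w : V p) : V p := fc v w - fc w v

lemma fc_zero_left (w : V p) : fc 0 w = 0 := by funext k; simp [fc]
lemma fc_zero_right (v : V p) : fc v 0 = 0 := by funext k; simp [fc]

variable (p)

@[ext]
structure Hg where
  a : V p
  b : V p

instance : Group (Hg p) where
  mul x y := ⟨x.a + y.a, x.b + y.b + fc x.a y.a⟩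
  one := ⟨0, 0⟩
  inv x := ⟨-x.a, -x.b + fc x.a x.a⟩
  mul_assoc x y z := by
    refine Hg.ext ?_ ?_
    · show x.a + y.a + z.a = x.a + (y.a + z.a); ring
    · show x.b + y.b + fc x.a y.a + z.b + fc (x.a+y.a) z.a
        = x.b + (y.b + z.b + fc y.a z.a) + fc x.a (y.a + z.a)
      funext k; simp [fc]; ring
  one_mul x := by
    refine Hg.ext ?_ ?_
    · show 0 + x.a = x.a; ring
    · show 0 + x.b + fc 0 x.a = x.b; rw [fc_zero_left]; ring
  mul_one x := by
    refine Hg.ext ?_ ?_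
    · show x.a + 0 = x.a; ring
    · show x.b + 0 + fc x.a 0 = x.b; rw [fc_zero_right]; ring
  inv_mul_cancel x := by
    refine Hg.ext ?_ ?_
    · show -x.a + x.a = 0; ring
    · show -x.b + fc x.a x.a + x.b + fc (-x.a) x.a = 0
      funext k; simp [fc]; try ring

variable {p}

lemma Hg_mul_def (x y : Hg p) : x * y = ⟨x.a + y.a, x.b + y.b + fc x.a y.a⟩ := rfl
lemma Hg_one_def : (1 : Hg p) = ⟨0, 0⟩ := rfl
lemma Hg_inv_def (x : Hg p) : x⁻¹ = ⟨-x.a, -x.b + fc x.a x.a⟩ := rfl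

@[simp] lemma Hg_mul_a (x y : Hg p) : (x * y).a = x.a + y.a := rfl
@[simp] lemma Hg_mul_b (x y : Hg p) : (x * y).b = x.b + y.b + fc x.a y.a := rfl
@[simp] lemma Hg_one_a : (1 : Hg p).a = 0 := rfl
@[simp] lemma Hg_one_b : (1 : Hg p).b = 0 := rfl

lemma Hg_commutator (x y : Hg p) : ⁅x, y⁆ = ⟨0, om x.a y.a⟩ := by
  show x * y * x⁻¹ * y⁻¹ = _
  simp only [Hg_mul_def, Hg_inv_def]
  refine Hg.ext ?_ ?_
  · show x.a + y.a + -x.a + -y.a = 0; ring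
  · show x.b + y.b + fc x.a y.a + (-x.b + fc x.a x.a) + fc (x.a+y.a) (-x.a)
        + (-y.b + fc y.a y.a) + fc (x.a + y.a + -x.a) (-y.a) = om x.a y.a
    funext k; simp [fc, om]; ring

lemma Hg_pow (x : Hg p) (n : ℕ) :
    x ^ n = ⟨n • x.a, n • x.b + (n.choose 2) • fc x.a x.a⟩ := by
  induction n with
  | zero => simp [Hg_one_def]
  | succ m ih =>
    rw [pow_succ, ih, Hg_mul_def]
    refine Hg.ext ?_ ?_
    · show m • x.a + x.a = (m+1) • x.a
      rw [add_smul, one_smul]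
    · show m • x.b + m.choose 2 • fc x.a x.a + x.b + fc (m • x.a) x.a
        = (m+1) • x.b + (m+1).choose 2 • fc x.a x.a
      have h1 : fc (m • x.a) x.a = m • fc x.a x.a := by
        funext k; simp [fc]; ring
      have h2 : (m+1).choose 2 = m.choose 2 + m := by
        rw [Nat.choose_succ_succ m 1, Nat.choose_one_right]; ring
      rw [h1, h2, add_smul, add_smul, one_smul]
      abel

lemma Hg_pow_p (hp : p.Prime) (hodd : p ≠ 2) (x : Hg p) : x ^ p = 1 := by
  haveI : NeZero p := ⟨hp.ne_zero⟩
  rw [Hg_pow, Hg_one_def]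
  have h0 : ∀ v : V p, p • v = 0 := by
    intro v; funext k
    simp [Pi.smul_apply, nsmul_eq_mul, ZMod.natCast_self]
  have hc : (p.choose 2) • fc x.a x.a = 0 := by
    have hdvd : p ∣ p.choose 2 := by
      have h2 : p.choose 2 = p * (p-1) / 2 := Nat.choose_two_right p
      have heven : 2 ∣ p - 1 := by
        rcases hp.eq_two_or_odd' with h | hodd'
        · exact absurd h hodd
        · obtain ⟨k, hk⟩ := hodd'
          have := hp.two_le
          omega
      obtain ⟨k, hk⟩ := heven
      have h2' : p * (p - 1) = 2 * (p * k) := by rw [hk]; ring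
      exact ⟨k, by rw [h2, h2', Nat.mul_div_cancel_left _ (by norm_num)]⟩
    obtain ⟨k, hk⟩ := hdvd
    rw [hk, mul_smul, h0]
  rw [h0, h0, hc, add_zero]

lemma Hg_comm_central (x y z : Hg p) : Commute ⁅x, y⁆ z := by
  rw [Hg_commutator]
  show _ * _ = _ * _
  simp only [Hg_mul_def]
  refine Hg.ext ?_ ?_
  · show (0:V p) + z.a = z.a + 0; ring
  · show om x.a y.a + z.b + fc 0 z.a = z.b + om x.a y.a + fc z.a 0
    rw [fc_zero_left, fc_zero_right]; ring

lemma Hg_commutator_le_center : commutator (Hg p) ≤ Subgroup.center (Hg p) := by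
  rw [commutator, Subgroup.commutator_le]
  intro g₁ _ g₂ _
  rw [Subgroup.mem_center_iff]
  intro z
  exact (Hg_comm_central g₁ g₂ z).symm.eq

variable (p)

/-- Subgroup of `Hg p` of elements with trivial first component. -/
def Kg : Subgroup (Hg p) where
  carrier := {x | x.a = 0}
  one_mem' := rfl
  mul_mem' := by
    intro x y (hx : x.a = 0) (hy : y.a = 0)
    show x.a + y.a = 0
    rw [hx, hy, add_zero]
  inv_mem' := by
    intro x (hx : x.a = 0)
    show -x.a = 0
    rw [hx, neg_zero]

variable {p}

def sing (i : Fin 3) (c : ZMod p) : V p := Pi.single i c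

lemma fc_single (i j : Fin 3) (c d : ZMod p) :
    fc (sing i c) (sing j d) = if i = 0 ∧ j = 1 then sing 0 (c*d)
      else if i = 0 ∧ j = 2 then sing 1 (c*d)
      else if i = 1 ∧ j = 2 then sing 2 (c*d) else 0 := by
  funext k
  fin_cases i <;> fin_cases j <;> fin_cases k <;>
    simp [fc, fA, fB, sing, Pi.single_apply]

lemma om_single_01 (c d : ZMod p) : om (sing 0 c) (sing 1 d) = sing 0 (c*d) := by
  unfold om; rw [fc_single, fc_single]; simp [mul_comm]
lemma om_single_02 (c d : ZMod p) : om (sing 0 c) (sing 2 d) = sing 1 (c*d) := by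
  unfold om; rw [fc_single, fc_single]; simp [mul_comm]
lemma om_single_12 (c d : ZMod p) : om (sing 1 c) (sing 2 d) = sing 2 (c*d) := by
  unfold om; rw [fc_single, fc_single]; simp [mul_comm]

lemma pair_mul (u v : V p) : (⟨0, u⟩ : Hg p) * ⟨0, v⟩ = (⟨0, u + v⟩ : Hg p) := by
  rw [Hg_mul_def]
  refine Hg.ext ?_ ?_
  · show (0 : V p) + 0 = 0; simp
  · show u + v + fc 0 0 = u + v; rw [fc_zero_left]; simp

lemma pair_mem_commutator (k : Fin 3) (c : ZMod p) :
    (⟨0, sing k c⟩ : Hg p) ∈ commutator (Hg p) := by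
  have gen : ∀ (i j : Fin 3) (c₀ : ZMod p), om (sing i (1:ZMod p)) (sing j c₀) = sing k c →
      (⟨0, sing k c⟩ : Hg p) ∈ commutator (Hg p) := by
    intro i j c₀ h
    have : (⟨0, sing k c⟩ : Hg p) = ⁅(⟨sing i 1, 0⟩ : Hg p), (⟨sing j c₀, 0⟩ : Hg p)⁆ := by
      rw [Hg_commutator, h]
    rw [this, commutator]
    exact Subgroup.commutator_mem_commutator (Subgroup.mem_top _) (Subgroup.mem_top _)
  fin_cases k
  · exact gen 0 1 c (by rw [om_single_01, one_mul]; rfl)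
  · exact gen 0 2 c (by rw [om_single_02, one_mul]; rfl)
  · exact gen 1 2 c (by rw [om_single_12, one_mul]; rfl)

lemma Kg_mem_commutator (x : Hg p) (hx : x.a = 0) : x ∈ commutator (Hg p) := by
  have hx2 : x = (⟨0, sing 0 (x.b 0)⟩ : Hg p) * ⟨0, sing 1 (x.b 1)⟩ * ⟨0, sing 2 (x.b 2)⟩ := by
    rw [pair_mul, pair_mul]
    refine Hg.ext hx ?_
    funext k; fin_cases k <;> simp [sing, Pi.single_apply]
  rw [hx2]
  exact mul_mem (mul_mem (pair_mem_commutator 0 _) (pair_mem_commutator 1 _))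
    (pair_mem_commutator 2 _)

lemma commutator_Hg_eq : commutator (Hg p) = Kg p := by
  apply le_antisymm
  · rw [commutator, Subgroup.commutator_le]
    intro g₁ _ g₂ _
    show (⁅g₁, g₂⁆).a = 0
    rw [Hg_commutator]
  · intro x hx
    exact Kg_mem_commutator x hx

lemma card_V (hp : p.Prime) : Nat.card (V p) = p ^ 3 := by
  haveI : NeZero p := ⟨hp.ne_zero⟩
  rw [Nat.card_fun]
  simp [Nat.card_zmod, Nat.card_eq_fintype_card]

lemma card_Kg (hp : p.Prime) : Nat.card (Kg p) = p ^ 3 := by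
  have e : (Kg p) ≃ V p := {
    toFun := fun x => x.1.b
    invFun := fun a => ⟨⟨0, a⟩, rfl⟩
    left_inv := by rintro ⟨⟨v, a⟩, (hv : v = 0)⟩; simp [hv]
    right_inv := fun a => rfl }
  rw [Nat.card_congr e, card_V hp]

lemma card_Hg (hp : p.Prime) : Nat.card (Hg p) = p ^ 6 := by
  have e : Hg p ≃ (V p × V p) := {
    toFun := fun x => (x.a, x.b)
    invFun := fun x => ⟨x.1, x.2⟩
    left_inv := fun x => rfl
    right_inv := fun x => rfl }
  rw [Nat.card_congr e, Nat.card_prod, card_V hp]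
  ring


section psi
variable {Γ : Type*} [CommGroup Γ] {p : ℕ} [NeZero p]

lemma pow_val_add (x : Γ) (hx : x ^ p = 1) (s t : ZMod p) :
    x ^ (s + t).val = x ^ s.val * x ^ t.val := by
  have hmod : ∀ n : ℕ, x ^ (n % p) = x ^ n := by
    intro n
    conv_rhs => rw [← Nat.div_add_mod n p]
    rw [pow_add, pow_mul, hx, one_pow, one_mul]
  rw [ZMod.val_add, hmod, pow_add]

variable (p)

/-- normal form map -/
def psi (a b c : Γ) : (Fin 3 → ZMod p) → Γ :=
  fun m => a ^ (m 0).val * b ^ (m 1).val * c ^ (m 2).val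

variable {p}

lemma psi_mul (a b c : Γ) (ha : a ^ p = 1) (hb : b ^ p = 1) (hc : c ^ p = 1)
    (m m' : Fin 3 → ZMod p) :
    psi p a b c m * psi p a b c m' = psi p a b c (m + m') := by
  unfold psi
  simp only [Pi.add_apply, pow_val_add a ha, pow_val_add b hb, pow_val_add c hc]
  simp [mul_comm, mul_assoc, mul_left_comm]

lemma psi_zero (a b c : Γ) : psi p a b c 0 = 1 := by
  unfold psi
  simp [ZMod.val_zero]

lemma range_psi (hp1 : 1 < p) (a b c : Γ) (ha : a ^ p = 1) (hb : b ^ p = 1) (hc : c ^ p = 1) :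
    Set.range (psi p a b c) = (Subgroup.closure {a, b, c} : Set Γ) := by
  apply le_antisymm
  · rintro _ ⟨m, rfl⟩
    unfold psi
    have hma : a ∈ Subgroup.closure {a, b, c} := Subgroup.subset_closure (by simp)
    have hmb : b ∈ Subgroup.closure {a, b, c} := Subgroup.subset_closure (by simp)
    have hmc : c ∈ Subgroup.closure {a, b, c} := Subgroup.subset_closure (by simp)
    exact mul_mem (mul_mem (pow_mem hma _) (pow_mem hmb _)) (pow_mem hmc _)
  · intro x hx
    haveI : Fact (1 < p) := ⟨hp1⟩
    induction hx using Subgroup.closure_induction with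
    | mem y hy =>
      rcases hy with rfl | rfl | rfl
      · exact ⟨Pi.single 0 1, by unfold psi; simp [Pi.single_apply, ZMod.val_one, ZMod.val_zero]⟩
      · exact ⟨Pi.single 1 1, by unfold psi; simp [Pi.single_apply, ZMod.val_one, ZMod.val_zero]⟩
      · exact ⟨Pi.single 2 1, by unfold psi; simp [Pi.single_apply, ZMod.val_one, ZMod.val_zero]⟩
    | one => exact ⟨0, psi_zero a b c⟩
    | mul u v _ _ hu hv =>
      obtain ⟨m, rfl⟩ := hu
      obtain ⟨m', rfl⟩ := hv
      exact ⟨m + m', (psi_mul a b c ha hb hc m m').symm⟩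
    | inv u _ hu =>
      obtain ⟨m, rfl⟩ := hu
      refine ⟨-m, ?_⟩
      have : psi p a b c (-m) * psi p a b c m = 1 := by
        rw [psi_mul a b c ha hb hc, neg_add_cancel, psi_zero]
      exact eq_inv_of_mul_eq_one_left this

lemma card_closure_le (hp : p.Prime) (a b c : Γ) (ha : a ^ p = 1) (hb : b ^ p = 1) (hc : c ^ p = 1) :
    Nat.card (Subgroup.closure {a, b, c} : Subgroup Γ) ≤ p ^ 3 ∧
      Finite (Subgroup.closure {a, b, c} : Subgroup Γ) := by
  have hr := range_psi hp.one_lt a b c ha hb hc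
  have hsurj : Function.Surjective
      (fun m => (⟨psi p a b c m, by rw [← SetLike.mem_coe, ← hr]; exact Set.mem_range_self m⟩ :
        (Subgroup.closure {a, b, c} : Subgroup Γ))) := by
    rintro ⟨x, hx⟩
    rw [← SetLike.mem_coe, ← hr] at hx
    obtain ⟨m, hm⟩ := hx
    exact ⟨m, Subtype.ext hm⟩
  haveI : NeZero p := ⟨hp.ne_zero⟩
  constructor
  · calc Nat.card (Subgroup.closure {a, b, c} : Subgroup Γ)
        ≤ Nat.card (Fin 3 → ZMod p) := Nat.card_le_card_of_surjective _ hsurj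
      _ = p ^ 3 := card_V hp
  · exact Finite.of_surjective _ hsurj

end psi

section Gside

variable (p : ℕ)

abbrev FF := FreeGroup (Fin 3)
abbrev GG := FF ⧸ NN p

def pr : FF →* GG p := QuotientGroup.mk' (NN p)

lemma pr_surjective : Function.Surjective (pr p) := QuotientGroup.mk'_surjective _

variable {p}

lemma GG_exp (g : GG p) : g ^ p = 1 := by
  obtain ⟨f, rfl⟩ := pr_surjective p g
  rw [← map_pow]
  refine (QuotientGroup.eq_one_iff _).mpr ?_
  refine Subgroup.mem_sup_right ?_
  exact Subgroup.subset_closure ⟨f, by simp⟩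

lemma GG_lcs2 (a b g : GG p) : ⁅⁅a, b⁆, g⁆ = 1 := by
  obtain ⟨a', rfl⟩ := pr_surjective p a
  obtain ⟨b', rfl⟩ := pr_surjective p b
  obtain ⟨g', rfl⟩ := pr_surjective p g
  rw [← map_commutatorElement, ← map_commutatorElement]
  have hmem : ⁅⁅a', b'⁆, g'⁆ ∈ NN p := by
    refine Subgroup.mem_sup_left ?_
    have h1 : ⁅a', b'⁆ ∈ (⊤ : Subgroup FF).lowerCentralSeries 1 := by
      exact (Subgroup.mem_lowerCentralSeries_succ_iff _ 0 _).mpr (Subgroup.subset_closure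
        ⟨a', by simp [Subgroup.lowerCentralSeries], b', by simp, rfl⟩)
    exact (Subgroup.mem_lowerCentralSeries_succ_iff _ 1 _).mpr (Subgroup.subset_closure
      ⟨⁅a', b'⁆, h1, g', by simp, rfl⟩)
  exact (QuotientGroup.eq_one_iff _).mpr hmem

lemma GG_comm_central (a b : GG p) : ⁅a, b⁆ ∈ Subgroup.center (GG p) := by
  rw [Subgroup.mem_center_iff]
  intro g
  have := GG_lcs2 a b g
  rw [commutatorElement_eq_one_iff_commute] at this
  exact this.symm.eq

variable (p)

def xg (i : Fin 3) : GG p := pr p (FreeGroup.of i)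

lemma GG_gen : Subgroup.closure {xg p 0, xg p 1, xg p 2} = ⊤ := by
  have h1 : Subgroup.map (pr p) ⊤ = ⊤ :=
    Subgroup.map_top_of_surjective _ (pr_surjective p)
  rw [← FreeGroup.closure_range_of (Fin 3), MonoidHom.map_closure] at h1
  rw [← h1]
  congr 1
  rw [← Set.range_comp]
  have hset : ⇑(pr p) ∘ FreeGroup.of = ![xg p 0, xg p 1, xg p 2] := by
    funext i; fin_cases i <;> rfl
  rw [hset]
  simp only [Matrix.range_cons, Matrix.range_empty, Set.union_empty]
  ext y
  simp only [Set.mem_insert_iff, Set.mem_singleton_iff, Set.mem_union]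
  try tauto

def cg (i j : Fin 3) : GG p := ⁅xg p i, xg p j⁆

/-- bilinearity of commutators in a class-2 group -/
lemma comm_mul_right (a y z : GG p) : ⁅a, y * z⁆ = ⁅a, y⁆ * ⁅a, z⁆ := by
  have hc : ∀ g : GG p, g * ⁅a, z⁆ = ⁅a, z⁆ * g := fun g =>
    (Subgroup.mem_center_iff.mp (GG_comm_central a z) g)
  calc ⁅a, y * z⁆ = (a * y * a⁻¹) * ⁅a, z⁆ * y⁻¹ := by
        show a * (y*z) * a⁻¹ * (y*z)⁻¹ = (a * y * a⁻¹) * (a * z * a⁻¹ * z⁻¹) * y⁻¹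
        group
    _ = (a * y * a⁻¹) * (y⁻¹ * ⁅a, z⁆) := by rw [mul_assoc, hc y⁻¹]
    _ = ⁅a, y⁆ * ⁅a, z⁆ := by
        show a * y * a⁻¹ * (y⁻¹ * (a * z * a⁻¹ * z⁻¹)) = (a * y * a⁻¹ * y⁻¹) * (a * z * a⁻¹ * z⁻¹)
        group

lemma comm_inv_right (a y : GG p) : ⁅a, y⁻¹⁆ = ⁅a, y⁆⁻¹ := by
  have h := comm_mul_right p a y y⁻¹
  rw [mul_inv_cancel] at h
  have h1 : ⁅a, (1 : GG p)⁆ = 1 := by simp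
  rw [h1] at h
  exact eq_inv_of_mul_eq_one_right h.symm

lemma commutator_GG_eq :
    commutator (GG p) = Subgroup.closure {cg p 0 1, cg p 0 2, cg p 1 2} := by
  apply le_antisymm
  · rw [commutator, Subgroup.commutator_le]
    intro g₁ _ g₂ _
    set C := Subgroup.closure {cg p 0 1, cg p 0 2, cg p 1 2}
    -- first: commutators of generators
    have hswap : ∀ u v : GG p, ⁅u, v⁆ ∈ C → ⁅v, u⁆ ∈ C := by
      intro u v h
      rw [← commutatorElement_inv]
      exact inv_mem h
    have base : ∀ i j : Fin 3, ⁅xg p i, xg p j⁆ ∈ C := by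
      intro i j
      have mem01 : cg p 0 1 ∈ C := Subgroup.subset_closure (by simp)
      have mem02 : cg p 0 2 ∈ C := Subgroup.subset_closure (by simp)
      have mem12 : cg p 1 2 ∈ C := Subgroup.subset_closure (by simp)
      fin_cases i <;> fin_cases j <;>
        first
          | (rw [commutatorElement_self]; exact one_mem C)
          | exact mem01
          | exact mem02
          | exact mem12
          | exact hswap _ _ mem01
          | exact hswap _ _ mem02
          | exact hswap _ _ mem12
    -- second: for generator a, all b
    have step1 : ∀ (a : GG p), (a ∈ ({xg p 0, xg p 1, xg p 2} : Set (GG p))) →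
        ∀ b : GG p, ⁅a, b⁆ ∈ C := by
      intro a ha b
      have hb : b ∈ Subgroup.closure {xg p 0, xg p 1, xg p 2} := by
        rw [GG_gen]; trivial
      induction hb using Subgroup.closure_induction with
      | mem y hy =>
        rcases ha with rfl | rfl | rfl <;> rcases hy with rfl | rfl | rfl <;>
          exact base _ _
      | one => simpa using one_mem C
      | mul u v _ _ hu hv =>
        rw [comm_mul_right]
        exact mul_mem hu hv
      | inv u _ hu =>
        rw [comm_inv_right]
        exact inv_mem hu
    -- third: all a, all b
    have step2 : ∀ a b : GG p, ⁅a, b⁆ ∈ C := by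
      intro a b
      have ha : a ∈ Subgroup.closure {xg p 0, xg p 1, xg p 2} := by
        rw [GG_gen]; trivial
      induction ha using Subgroup.closure_induction with
      | mem y hy => exact step1 y hy b
      | one => simpa using one_mem C
      | mul u v _ _ hu hv =>
        have : ⁅u * v, b⁆ = ⁅v, b⁆ * ⁅u, b⁆ := by
          rw [← commutatorElement_inv b (u*v), comm_mul_right, mul_inv_rev,
            commutatorElement_inv b u, commutatorElement_inv b v]
        rw [this]
        exact mul_mem hv hu
      | inv u _ hu =>
        have : ⁅u⁻¹, b⁆ = ⁅u, b⁆⁻¹ := by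
          rw [← commutatorElement_inv b u⁻¹, comm_inv_right, ← commutatorElement_inv b u]
          try simp
        rw [this]
        exact inv_mem hu
    exact step2 g₁ g₂
  · rw [Subgroup.closure_le]
    rintro y (rfl | rfl | rfl) <;>
      exact Subgroup.commutator_mem_commutator (Subgroup.mem_top _) (Subgroup.mem_top _)


lemma commutator_GG_le_center : commutator (GG p) ≤ Subgroup.center (GG p) := by
  rw [commutator, Subgroup.commutator_le]
  intro g₁ _ g₂ _
  exact GG_comm_central g₁ g₂

def commGG : CommGroup ↥(commutator (GG p)) :=
  { (inferInstance : Group ↥(commutator (GG p))) with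
    mul_comm := by
      rintro ⟨x, hx⟩ ⟨y, hy⟩
      apply Subtype.ext
      show x * y = y * x
      exact (Subgroup.mem_center_iff.mp (commutator_GG_le_center p hx) y).symm }

lemma cg_mem (i j : Fin 3) : cg p i j ∈ commutator (GG p) := by
  rw [commutator]
  exact Subgroup.commutator_mem_commutator (Subgroup.mem_top _) (Subgroup.mem_top _)

/-- bundled generators of the commutator subgroup -/
def Ag : ↥(commutator (GG p)) := ⟨cg p 0 1, cg_mem p 0 1⟩
def Bg : ↥(commutator (GG p)) := ⟨cg p 0 2, cg_mem p 0 2⟩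
def Cg : ↥(commutator (GG p)) := ⟨cg p 1 2, cg_mem p 1 2⟩

lemma subtype_gen_top : Subgroup.closure {Ag p, Bg p, Cg p} = ⊤ := by
  rw [eq_top_iff]
  rintro z -
  have hle : Subgroup.closure {cg p 0 1, cg p 0 2, cg p 1 2} ≤ commutator (GG p) :=
    (commutator_GG_eq p).ge
  have key : ∀ w (_ : w ∈ Subgroup.closure {cg p 0 1, cg p 0 2, cg p 1 2}),
      ∀ (h' : w ∈ commutator (GG p)),
      (⟨w, h'⟩ : ↥(commutator (GG p))) ∈ Subgroup.closure {Ag p, Bg p, Cg p} := by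
    intro w hw
    induction hw using Subgroup.closure_induction with
    | mem y hy =>
      intro h'
      rcases hy with rfl | rfl | rfl
      · exact Subgroup.subset_closure (by left; rfl)
      · exact Subgroup.subset_closure (by right; left; rfl)
      · exact Subgroup.subset_closure (by right; right; rfl)
    | one =>
      intro h'
      have : (⟨1, h'⟩ : ↥(commutator (GG p))) = 1 := Subtype.ext rfl
      rw [this]; exact one_mem _
    | mul x y hx hy ihx ihy =>
      intro h'
      have : (⟨x * y, h'⟩ : ↥(commutator (GG p))) = ⟨x, hle hx⟩ * ⟨y, hle hy⟩ :=
        Subtype.ext rfl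
      rw [this]
      exact mul_mem (ihx _) (ihy _)
    | inv x hx ihx =>
      intro h'
      have : (⟨x⁻¹, h'⟩ : ↥(commutator (GG p))) = (⟨x, hle hx⟩ : ↥(commutator (GG p)))⁻¹ :=
        Subtype.ext rfl
      rw [this]
      exact inv_mem (ihx _)
  have hz : (z : GG p) ∈ Subgroup.closure {cg p 0 1, cg p 0 2, cg p 1 2} := by
    rw [← commutator_GG_eq]; exact z.2
  have := key z.1 hz z.2
  simpa using this

lemma comm_GG_card_le (hp : p.Prime) :
    Nat.card ↥(commutator (GG p)) ≤ p ^ 3 ∧ Finite ↥(commutator (GG p)) := by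
  letI := commGG p
  haveI : NeZero p := ⟨hp.ne_zero⟩
  have hA : Ag p ^ p = 1 := Subtype.ext (by
    show (cg p 0 1) ^ p = 1
    exact GG_exp _)
  have hB : Bg p ^ p = 1 := Subtype.ext (by
    show (cg p 0 2) ^ p = 1
    exact GG_exp _)
  have hC : Cg p ^ p = 1 := Subtype.ext (by
    show (cg p 1 2) ^ p = 1
    exact GG_exp _)
  obtain ⟨hcard, hfin⟩ := card_closure_le hp (Ag p) (Bg p) (Cg p) hA hB hC
  erw [subtype_gen_top p] at hcard hfin
  have etop : ↥(⊤ : Subgroup ↥(commutator (GG p))) ≃ ↥(commutator (GG p)) :=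
    Subgroup.topEquiv.toEquiv
  constructor
  · rw [← Nat.card_congr etop]; exact hcard
  · exact Finite.of_equiv _ etop

lemma quot_GG_card_le (hp : p.Prime) :
    Nat.card (GG p ⧸ commutator (GG p)) ≤ p ^ 3 ∧ Finite (GG p ⧸ commutator (GG p)) := by
  letI : CommGroup (GG p ⧸ commutator (GG p)) :=
    inferInstanceAs (CommGroup (Abelianization (GG p)))
  haveI : NeZero p := ⟨hp.ne_zero⟩
  set q : GG p →* GG p ⧸ commutator (GG p) := QuotientGroup.mk' _ with hq
  have hgen : Subgroup.closure {q (xg p 0), q (xg p 1), q (xg p 2)} = ⊤ := by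
    have h1 : Subgroup.map q ⊤ = ⊤ :=
      Subgroup.map_top_of_surjective _ (QuotientGroup.mk'_surjective _)
    rw [← GG_gen p, MonoidHom.map_closure] at h1
    rw [← h1]
    congr 1
    rw [Set.image_insert_eq, Set.image_insert_eq, Set.image_singleton]
  have hpow : ∀ x : GG p, (q x) ^ p = 1 := by
    intro x
    rw [← map_pow, GG_exp, map_one]
  obtain ⟨hcard, hfin⟩ := card_closure_le hp (q (xg p 0)) (q (xg p 1)) (q (xg p 2))
    (hpow _) (hpow _) (hpow _)
  rw [hgen] at hcard hfin
  have etop : ↥(⊤ : Subgroup (GG p ⧸ commutator (GG p))) ≃ (GG p ⧸ commutator (GG p)) :=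
    Subgroup.topEquiv.toEquiv
  constructor
  · rw [← Nat.card_congr etop]; exact hcard
  · exact Finite.of_equiv _ etop

lemma GG_finite_card_le (hp : p.Prime) :
    Nat.card (GG p) ≤ p ^ 6 ∧ Finite (GG p) := by
  obtain ⟨hc1, hf1⟩ := comm_GG_card_le p hp
  obtain ⟨hc2, hf2⟩ := quot_GG_card_le p hp
  haveI := hf1; haveI := hf2
  have e := (Subgroup.groupEquivQuotientProdSubgroup (s := commutator (GG p)))
  constructor
  · have := Subgroup.card_eq_card_quotient_mul_card_subgroup (commutator (GG p))
    rw [this]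
    calc Nat.card (GG p ⧸ commutator (GG p)) * Nat.card ↥(commutator (GG p))
        ≤ p ^ 3 * p ^ 3 := Nat.mul_le_mul hc2 hc1
      _ = p ^ 6 := by ring
  · exact Finite.of_equiv _ e.symm


def φh : FF →* Hg p := FreeGroup.lift (fun i => (⟨sing i 1, 0⟩ : Hg p))

lemma fc_diag (j : Fin 3) (c d : ZMod p) : fc (sing j c) (sing j d) = 0 := by
  rw [fc_single]; fin_cases j <;> simp

lemma gen_pow (j : Fin 3) (n : ℕ) :
    (⟨sing j 1, (0 : V p)⟩ : Hg p) ^ n = ⟨sing j (n : ZMod p), 0⟩ := by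
  rw [Hg_pow]
  refine Hg.ext ?_ ?_
  · show n • sing j 1 = sing j (n : ZMod p)
    funext k
    simp only [Pi.smul_apply, sing, Pi.single_apply, nsmul_eq_mul]
    split <;> simp
  · show n • (0 : V p) + n.choose 2 • fc (sing j 1) (sing j 1) = 0
    rw [fc_diag]
    simp

lemma gen_zpow_val [NeZero p] (j : Fin 3) (c : ZMod p) :
    (⟨sing j 1, (0 : V p)⟩ : Hg p) ^ (c.val) = ⟨sing j c, 0⟩ := by
  rw [gen_pow, ZMod.natCast_val, ZMod.cast_id]

lemma pair_decomp (u : V p) :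
    (⟨0, u⟩ : Hg p) = (⟨0, sing 0 (u 0)⟩ : Hg p) * ⟨0, sing 1 (u 1)⟩ * ⟨0, sing 2 (u 2)⟩ := by
  rw [pair_mul, pair_mul]
  refine Hg.ext rfl ?_
  funext k; fin_cases k <;> simp [sing, Pi.single_apply]

lemma NN_le_ker (hp : p.Prime) (hodd : p ≠ 2) : NN p ≤ (φh p).ker := by
  rw [NN]
  apply sup_le
  · rw [Subgroup.lowerCentralSeries_succ, Subgroup.commutator_def, Subgroup.closure_le]
    rintro x ⟨a, ha, g, -, rfl⟩
    have h1 : (⊤ : Subgroup FF).lowerCentralSeries 1 = commutator FF :=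
      Subgroup.top_lowerCentralSeries_one
    rw [h1] at ha
    have haC : φh p a ∈ commutator (Hg p) := by
      have : Subgroup.map (φh p) (commutator FF) ≤ commutator (Hg p) := by
        rw [commutator, commutator, Subgroup.map_commutator]
        exact Subgroup.commutator_mono le_top le_top
      exact this ⟨a, ha, rfl⟩
    have hcen := Hg_commutator_le_center haC
    show a * g * a⁻¹ * g⁻¹ ∈ (φh p).ker
    rw [MonoidHom.mem_ker, ← commutatorElement_def, map_commutatorElement]
    rw [commutatorElement_eq_one_iff_commute]
    exact ((Subgroup.mem_center_iff.mp hcen (φh p g))).symm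
  · rw [sgPow, Subgroup.closure_le]
    rintro x ⟨f, -, rfl⟩
    show f ^ p ∈ (φh p).ker
    rw [MonoidHom.mem_ker, map_pow]
    exact Hg_pow_p hp hodd _

lemma φh_surj (hp : p.Prime) : Function.Surjective (φh p) := by
  haveI : NeZero p := ⟨hp.ne_zero⟩
  intro x
  suffices h : x ∈ (φh p).range by
    obtain ⟨f, hf⟩ := h
    exact ⟨f, hf⟩
  set R := (φh p).range with hR
  have hgen : ∀ i : Fin 3, (⟨sing i 1, (0:V p)⟩ : Hg p) ∈ R :=
    fun i => ⟨FreeGroup.of i, FreeGroup.lift_apply_of⟩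
  have hgenpow : ∀ (i : Fin 3) (c : ZMod p), (⟨sing i c, (0:V p)⟩ : Hg p) ∈ R := by
    intro i c
    rw [← gen_zpow_val]
    exact pow_mem (hgen i) _
  have hpair : ∀ (k : Fin 3) (c : ZMod p), (⟨0, sing k c⟩ : Hg p) ∈ R := by
    have comm_mem : ∀ u v : Hg p, u ∈ R → v ∈ R → ⁅u, v⁆ ∈ R := by
      intro u v hu hv
      rw [commutatorElement_def]
      exact mul_mem (mul_mem (mul_mem hu hv) (inv_mem hu)) (inv_mem hv)
    have gen : ∀ (k i j : Fin 3) (c : ZMod p),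
        om (sing i (1:ZMod p)) (sing j c) = sing k c → (⟨0, sing k c⟩ : Hg p) ∈ R := by
      intro k i j c h
      have : (⟨0, sing k c⟩ : Hg p) = ⁅(⟨sing i 1, 0⟩ : Hg p), (⟨sing j c, 0⟩ : Hg p)⁆ := by
        rw [Hg_commutator, h]
      rw [this]
      exact comm_mem _ _ (hgen i) (hgenpow j c)
    intro k c
    fin_cases k
    · exact gen 0 0 1 c (by rw [om_single_01, one_mul])
    · exact gen 1 0 2 c (by rw [om_single_02, one_mul])
    · exact gen 2 1 2 c (by rw [om_single_12, one_mul])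
  have hpair' : ∀ u : V p, (⟨0, u⟩ : Hg p) ∈ R := by
    intro u
    rw [pair_decomp]
    exact mul_mem (mul_mem (hpair 0 _) (hpair 1 _)) (hpair 2 _)
  -- the triple product hitting first component x.a
  set P : Hg p := (⟨sing 0 (x.a 0), 0⟩ : Hg p) * ⟨sing 1 (x.a 1), 0⟩ * ⟨sing 2 (x.a 2), 0⟩
    with hPdef
  have hP : P ∈ R := mul_mem (mul_mem (hgenpow 0 _) (hgenpow 1 _)) (hgenpow 2 _)
  have hPa : P.a = x.a := by
    rw [hPdef]
    show sing 0 (x.a 0) + sing 1 (x.a 1) + sing 2 (x.a 2) = x.a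
    funext k; fin_cases k <;> simp [sing, Pi.single_apply]
  have hx : x = P * ⟨0, -P.b + x.b⟩ := by
    rw [Hg_mul_def]
    refine Hg.ext ?_ ?_
    · show x.a = P.a + 0; rw [hPa, add_zero]
    · show x.b = P.b + (-P.b + x.b) + fc P.a 0
      rw [fc_zero_right]; ring
  rw [hx]
  exact mul_mem hP (hpair' _)

variable {p}

lemma GG_iso (hp : p.Prime) (h3 : 3 ≤ p) :
    ∃ e : GG p ≃* Hg p, True := by
  have hodd : p ≠ 2 := by omega
  set φbar : GG p →* Hg p := QuotientGroup.lift (NN p) (φh p) (NN_le_ker p hp hodd)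
    with hφbar
  have hsurj : Function.Surjective φbar := by
    intro x
    obtain ⟨f, hf⟩ := φh_surj p hp x
    exact ⟨QuotientGroup.mk f, hf⟩
  haveI : Finite (GG p) := (GG_finite_card_le p hp).2
  have hcard : Nat.card (GG p) = Nat.card (Hg p) := by
    apply le_antisymm
    · rw [card_Hg hp]; exact (GG_finite_card_le p hp).1
    · exact Nat.card_le_card_of_surjective φbar hsurj
  have hbij : Function.Bijective φbar :=
    (Nat.bijective_iff_surjective_and_card φbar).mpr ⟨hsurj, hcard⟩
  exact ⟨MulEquiv.ofBijective φbar hbij, trivial⟩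

lemma card_comm_GG_aux (e : GG p ≃* Hg p) (hp : p.Prime) :
    Nat.card ↥(commutator (GG p)) = p ^ 3 := by
  have hmap : Subgroup.map e.toMonoidHom (commutator (GG p)) = commutator (Hg p) := by
    rw [commutator, commutator, Subgroup.map_commutator,
      Subgroup.map_top_of_surjective _ e.surjective]
  have heq := Subgroup.equivMapOfInjective (commutator (GG p)) e.toMonoidHom e.injective
  rw [Nat.card_congr heq.toEquiv, hmap, commutator_Hg_eq]
  exact card_Kg hp


lemma om_self (v : V p) : om v v = 0 := by simp [om]

lemma comm_set_bound_H (hp : p.Prime) (x' : Hg p) :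
    Nat.card ↥{y : Hg p | ∃ g, y = ⁅x', g⁆} ≤ p ^ 2 := by
  haveI : NeZero p := ⟨hp.ne_zero⟩
  haveI : Fact p.Prime := ⟨hp⟩
  set v := x'.a with hv
  -- describe the set as an image
  have hset : {y : Hg p | ∃ g, y = ⁅x', g⁆}
      = (fun u => (⟨0, u⟩ : Hg p)) '' Set.range (fun w => om v w) := by
    ext y
    constructor
    · rintro ⟨g, rfl⟩
      exact ⟨om v g.a, ⟨g.a, rfl⟩, (Hg_commutator x' g).symm⟩
    · rintro ⟨u, ⟨w, rfl⟩, rfl⟩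
      exact ⟨⟨w, 0⟩, by rw [Hg_commutator]⟩
  rw [hset]
  have hinj : Function.Injective (fun u => (⟨0, u⟩ : Hg p)) := by
    intro u u' h
    exact congrArg Hg.b h
  rw [Nat.card_image_of_injective hinj]
  -- linear map
  set L : V p →+ V p := AddMonoidHom.mk' (fun w => om v w) (by
    intro w w'
    funext k
    simp only [om, fc, Pi.sub_apply, Pi.add_apply]
    ring) with hL
  have hrange : Set.range (fun w => om v w) = (L.range : Set (V p)) := by
    rw [AddMonoidHom.coe_range]
    rfl
  rw [hrange]
  by_cases hv0 : v = 0
  · have : (L.range : Set (V p)) = {0} := by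
      ext u
      simp only [AddMonoidHom.coe_range, Set.mem_range, Set.mem_singleton_iff]
      constructor
      · rintro ⟨w, rfl⟩
        show om v w = 0
        rw [hv0]
        simp [om, fc_zero_left, fc_zero_right]
      · rintro rfl
        exact ⟨0, by show om v 0 = 0; simp [om, fc_zero_left, fc_zero_right]⟩
    rw [this]
    haveI := Set.uniqueSingleton (0 : V p)
    rw [Nat.card_unique]
    exact Nat.one_le_iff_ne_zero.mpr (pow_ne_zero 2 hp.ne_zero) |>.trans (le_refl _) |>.trans
      (le_refl _)
  · -- v ≠ 0 : kernel has at least p elements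
    have hLv : L v = 0 := om_self v
    have hvker : v ∈ L.ker := by rwa [AddMonoidHom.mem_ker]
    have hzm : AddSubgroup.zmultiples v ≤ L.ker := by
      intro u hu
      obtain ⟨n, rfl⟩ := AddSubgroup.mem_zmultiples_iff.mp hu
      rw [AddMonoidHom.mem_ker, map_zsmul, hLv, smul_zero]
    have hord : addOrderOf v = p := by
      apply addOrderOf_eq_prime
      · funext k
        simp [Pi.smul_apply, nsmul_eq_mul, ZMod.natCast_self]
      · exact hv0
    have hp_le : p ≤ Nat.card ↥L.ker := by
      calc p = Nat.card ↥(AddSubgroup.zmultiples v) := by rw [Nat.card_zmultiples, hord]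
        _ ≤ Nat.card ↥L.ker := AddSubgroup.card_le_of_le hzm
    have hprod : Nat.card (V p) = Nat.card (V p ⧸ L.ker) * Nat.card ↥L.ker :=
      AddSubgroup.card_eq_card_quotient_mul_card_addSubgroup _
    have hquot : Nat.card (V p ⧸ L.ker) = Nat.card ↥L.range :=
      Nat.card_congr (QuotientAddGroup.quotientKerEquivRange L).toEquiv
    have hkey : Nat.card ↥L.range * Nat.card ↥L.ker = p ^ 3 := by
      rw [← hquot, ← hprod, card_V hp]
    have h1 : Nat.card ↥L.range * p ≤ p ^ 2 * p := by
      calc Nat.card ↥L.range * p ≤ Nat.card ↥L.range * Nat.card ↥L.ker :=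
            Nat.mul_le_mul_left _ hp_le
        _ = p ^ 3 := hkey
        _ = p ^ 2 * p := by ring
    exact Nat.le_of_mul_le_mul_right h1 hp.pos

lemma comm_set_bound_GG (hp : p.Prime) (h3 : 3 ≤ p) (e : GG p ≃* Hg p) (x : GG p) :
    Nat.card ↥{y : GG p | ∃ g, y = ⁅x, g⁆} ≤ p ^ 2 := by
  have himg : (⇑e) '' {y : GG p | ∃ g, y = ⁅x, g⁆} = {y : Hg p | ∃ g, y = ⁅e x, g⁆} := by
    ext y
    constructor
    · rintro ⟨z, ⟨g, rfl⟩, rfl⟩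
      exact ⟨e g, (map_commutatorElement e x g)⟩
    · rintro ⟨g, rfl⟩
      obtain ⟨g', rfl⟩ := e.surjective g
      exact ⟨⁅x, g'⁆, ⟨g', rfl⟩, map_commutatorElement e x g'⟩
  have := Nat.card_image_of_injective e.injective {y : GG p | ∃ g, y = ⁅x, g⁆}
  rw [himg] at this
  rw [← this]
  exact comm_set_bound_H hp (e x)

end Gside
end St17

theorem no_single_commutator_word_in_free_quotient
    (p : ℕ) (hp : p.Prime) (hp3 : 3 ≤ p) :
    ∀ x : FreeGroup (Fin 3) ⧸ NN p,
      {y | ∃ g : FreeGroup (Fin 3) ⧸ NN p, y = ⁅x, g⁆} ≠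
        ((commutator (FreeGroup (Fin 3) ⧸ NN p) : Subgroup _) : Set (FreeGroup (Fin 3) ⧸ NN p)) ∧
      Nat.card {y | ∃ g : FreeGroup (Fin 3) ⧸ NN p, y = ⁅x, g⁆} ≤ p ^ 2 ∧
      Nat.card (commutator (FreeGroup (Fin 3) ⧸ NN p)) = p ^ 3 := by
  intro x
  obtain ⟨e, -⟩ := St17.GG_iso hp hp3
  have h2 : Nat.card {y | ∃ g : FreeGroup (Fin 3) ⧸ NN p, y = ⁅x, g⁆} ≤ p ^ 2 :=
    St17.comm_set_bound_GG hp hp3 e x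
  have h3 : Nat.card (commutator (FreeGroup (Fin 3) ⧸ NN p)) = p ^ 3 :=
    St17.card_comm_GG_aux e hp
  refine ⟨?_, h2, h3⟩
  intro heq
  have hc : Nat.card {y | ∃ g : FreeGroup (Fin 3) ⧸ NN p, y = ⁅x, g⁆}
      = Nat.card (commutator (FreeGroup (Fin 3) ⧸ NN p)) := by
    rw [heq]
    simp [SetLike.coe_sort_coe]
  rw [hc, h3] at h2
  have hlt : p ^ 2 < p ^ 3 := Nat.pow_lt_pow_right hp.one_lt (by norm_num)
  omega
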